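/- (Third scenario) Let γ ∈ ℝ, γ ≠ 0, and set Γ12 = (6/5)γ, Γ21 = −γ, Γ11 = −(31/10)γ, Γ22 = (29/10)γ, α = −6γ. Then the coexistence equilibrium E₁ = (f₁*, f₂*) of the system df₁/dt = −α f₁ f₂ + Γ11 f₁(1−f₁) + Γ12 f₂(1−f₂), df₂/dt = α f₁ f₂ + Γ21 f₁(1−f₁) + Γ22 f₂(1−f₂) satisfies f₁* = f₂* (the two equilibrium densities coincide); moreover the Jacobian J at E₁ has trace equal to a strictly negative constant times γ and (trace J)² − 4 det J < 0, so the eigenvalues of J are a non-real complex-conjugate pair whose common real part has the sign of −γ. In particular, if γ > 0 both eigenvalues have negative real part (E₁ is linearly stable), while if γ < 0 both have positive real part (E₁ is unstable). -/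
import Mathlib


/-- **Third scenario.** With `a = 6/5`, `b = −1`, `c = −31/10`,
`d = 29/10`, `g = −6` (so `Γ₁² = aγ`, `Γ₂¹ = bγ`, `Γ₁¹ = cγ`, `Γ₂² = dγ`, `α = gγ`,
`γ ≠ 0`), the coexistence equilibrium `E₁ = (f₁*, f₂*)` satisfies `f₁* = f₂*`; the
Jacobian `J` at `E₁` has trace equal to a strictly negative constant times `γ` and
negative discriminant `(tr J)² − 4 det J < 0`, so its eigenvalues are a non-real
complex-conjugate pair whose common real part has the sign of `−γ`: for `γ > 0` both
have negative real part (linearly stable), for `γ < 0` positive real part (unstable). -/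
theorem third_scenario (γ : ℝ) (hγ : γ ≠ 0) :
    let a : ℝ := 6 / 5
    let b : ℝ := -1
    let c : ℝ := -(31 / 10)
    let d : ℝ := 29 / 10
    let g : ℝ := -6
    let Γ12 : ℝ := a * γ
    let Γ21 : ℝ := b * γ
    let Γ11 : ℝ := c * γ
    let Γ22 : ℝ := d * γ
    let α : ℝ := g * γ
    let D : ℝ := (a * b - c * d) ^ 2 + g ^ 2 * (a + d) * (b + c)
    let f₁ : ℝ := (a * b - c * d) * ((a * b - c * d) + g * (a + d)) / D
    let f₂ : ℝ := (a * b - c * d) * ((a * b - c * d) - g * (b + c)) / D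
    let J : Matrix (Fin 2) (Fin 2) ℝ :=
      !![-α * f₂ + (1 - 2 * f₁) * Γ11, -α * f₁ + (1 - 2 * f₂) * Γ12;
          α * f₂ + (1 - 2 * f₁) * Γ21,  α * f₁ + (1 - 2 * f₂) * Γ22]
    f₁ = f₂ ∧
    (∃ C : ℝ, C < 0 ∧ Matrix.trace J = C * γ) ∧
    (Matrix.trace J) ^ 2 - 4 * J.det < 0 ∧
    ∀ μ : ℂ, μ ^ 2 - (Matrix.trace J : ℝ) * μ + (J.det : ℝ) = 0 →
      μ.im ≠ 0 ∧ (μ.re < 0 ↔ 0 < γ) ∧ (0 < μ.re ↔ γ < 0) := by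
  intro a b c d g Γ12 Γ21 Γ11 Γ22 α D f₁ f₂ J
  have hf1 : f₁ = 19 / 79 := by norm_num [f₁, D, a, b, c, d, g]
  have hf2 : f₂ = 19 / 79 := by norm_num [f₂, D, a, b, c, d, g]
  have htr : Matrix.trace J = -(41 / 395) * γ := by
    simp only [J, Matrix.trace_fin_two_of, hf1, hf2, α, Γ11, Γ22, a, b, c, d, g]
    ring
  have hdet : J.det = (31939 / 7900) * γ ^ 2 := by
    simp only [J, Matrix.det_fin_two_of, hf1, hf2, α, Γ11, Γ12, Γ21, Γ22, a, b, c, d, g]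
    ring
  have hγ2 : 0 < γ ^ 2 := by positivity
  refine ⟨by rw [hf1, hf2], ⟨-(41 / 395), by norm_num, htr⟩, ?_, ?_⟩
  · rw [htr, hdet]; nlinarith [hγ2]
  · intro μ hμ
    rw [htr, hdet] at hμ
    have hre := congrArg Complex.re hμ
    have him := congrArg Complex.im hμ
    set x := μ.re with hx
    set y := μ.im with hy
    simp [Complex.ext_iff, pow_two, Complex.mul_re, Complex.mul_im, ← hx, ← hy] at hre him
    -- hre : x*x - y*y - (-(41/395)*γ)*x + (31939/7900)*γ^2 = 0 (up to simp form)
    have hyne : y ≠ 0 := by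
      intro h0
      rw [h0] at hre
      nlinarith [hγ2, sq_nonneg (2 * x + (41 / 395) * γ)]
    have hxeq : x = -(41 / 790) * γ := by
      rcases mul_eq_zero.mp (show y * (2 * x + (41 / 395) * γ) = 0 by nlinarith [him]) with h | h
      · exact absurd h hyne
      · linarith
    refine ⟨hyne, ?_, ?_⟩ <;> rw [hxeq] <;> constructor <;> intro h <;> nlinarith
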